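/- Let d ≥ 1, δ, r > 0, and let M be a real symmetric d×d matrix with quadratic form f(x) = (1/2)·xᵀMx. Let e ∈ ℝ^d be an eigenvector of M (Me = λe for some λ ∈ ℝ) with ‖e‖ = r and f(e) < -δ, and let x̂ ∈ ℝ^d satisfy ‖x̂‖ = r, f(x̂) < -δ, and ⟨x̂, e⟩ ≥ 0. Then for all α, β ≥ 0 with ‖α·x̂ + β·e‖ = r, one has f(α·x̂ + β·e) < -δ. -/

import Mathlib

open scoped RealInnerProductSpace

/-- On the arc spanned by nonnegative combinations of `x̂` and an eigenvector
`e` (both of norm `r`, both with quadratic value `< -δ`, and `⟨x̂, e⟩ ≥ 0`), every point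
of norm `r` also has quadratic value `< -δ`. -/
theorem stmt3 (d : ℕ) (hd : 1 ≤ d) (δ r : ℝ) (hδ : 0 < δ) (hr : 0 < r)
    (M : Matrix (Fin d) (Fin d) ℝ) (hM : M.IsSymm)
    (f : EuclideanSpace ℝ (Fin d) → ℝ)
    (hf : ∀ x : EuclideanSpace ℝ (Fin d),
      f x = (1 / 2) * ⟪x, (WithLp.toLp 2 (M.mulVec x) : EuclideanSpace ℝ (Fin d))⟫)
    (e : EuclideanSpace ℝ (Fin d)) (lam : ℝ) (heig : M.mulVec e = lam • e)
    (hre : ‖e‖ = r) (hfe : f e < -δ)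
    (xh : EuclideanSpace ℝ (Fin d)) (hrx : ‖xh‖ = r) (hfx : f xh < -δ)
    (hip : 0 ≤ ⟪xh, e⟫) :
    ∀ α β : ℝ, 0 ≤ α → 0 ≤ β → ‖α • xh + β • e‖ = r → f (α • xh + β • e) < -δ := by
  intro α β hα hβ hnorm
  obtain ⟨c, hc⟩ : ∃ c : ℝ, c = ⟪xh, e⟫ := ⟨_, rfl⟩
  obtain ⟨A, hAdef⟩ : ∃ a : ℝ, a = ⟪xh, (WithLp.toLp 2 (M.mulVec xh) : EuclideanSpace ℝ (Fin d))⟫ := ⟨_, rfl⟩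
  rw [← hc] at hip
  have hr2 : (0:ℝ) < r ^ 2 := by positivity
  have hlam : lam * r ^ 2 < -(2 * δ) := by
    have h1 := hfe
    rw [hf, heig, WithLp.toLp_smul, WithLp.toLp_ofLp, real_inner_smul_right, real_inner_self_eq_norm_sq, hre] at h1
    nlinarith
  have hA : A < -(2 * δ) := by
    have h1 := hfx
    rw [hf, ← hAdef] at h1
    nlinarith
  -- symmetry of the bilinear form at the level of dot products
  have key0 : ∀ u v : Fin d → ℝ, dotProduct u (M.mulVec v)
      = dotProduct (M.mulVec u) v := by
    intro u v
    rw [Matrix.dotProduct_mulVec, ← Matrix.mulVec_transpose, hM.eq]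
  have hsym : ⟪e, (WithLp.toLp 2 (M.mulVec xh) : EuclideanSpace ℝ (Fin d))⟫ = lam * c := by
    have h1 := key0 e xh
    rw [heig, smul_dotProduct] at h1
    have h2 : ⟪e, (WithLp.toLp 2 (M.mulVec xh) : EuclideanSpace ℝ (Fin d))⟫ = lam * ⟪e, xh⟫ := by
      simp only [EuclideanSpace.inner_eq_star_dotProduct, star_trivial, WithLp.ofLp_toLp, smul_eq_mul]
      rw [dotProduct_comm, h1, dotProduct_comm, smul_eq_mul]
    rw [h2, real_inner_comm, ← hc]
  -- linearity of mulVec, transported to EuclideanSpace by defeq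
  have key : ∀ (u v : Fin d → ℝ) (a b : ℝ),
      M.mulVec (a • u + b • v) = a • M.mulVec u + b • M.mulVec v := by
    intro u v a b
    rw [Matrix.mulVec_add, Matrix.mulVec_smul, Matrix.mulVec_smul]
  have hmv : (WithLp.toLp 2 (M.mulVec (α • xh + β • e : EuclideanSpace ℝ (Fin d))) : EuclideanSpace ℝ (Fin d))
      = α • (WithLp.toLp 2 (M.mulVec xh) : EuclideanSpace ℝ (Fin d))
        + β • (WithLp.toLp 2 (M.mulVec e) : EuclideanSpace ℝ (Fin d)) := by
    rw [WithLp.ofLp_add, WithLp.ofLp_smul, WithLp.ofLp_smul, key, WithLp.toLp_add,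
      WithLp.toLp_smul, WithLp.toLp_smul]
  have heig' : (WithLp.toLp 2 (M.mulVec e) : EuclideanSpace ℝ (Fin d)) = lam • e := by
    rw [heig, WithLp.toLp_smul, WithLp.toLp_ofLp]
  have hexp : f (α • xh + β • e)
      = (1/2) * (α * α * A + 2 * (α * β) * (lam * c) + β * β * (lam * r ^ 2)) := by
    rw [hf, hmv, heig']
    simp only [inner_add_left, inner_add_right, real_inner_smul_left,
      real_inner_smul_right, hsym, real_inner_self_eq_norm_sq, hre]
    rw [← hc, ← hAdef]
    ring
  -- expand the norm constraint
  have hnc : α * α * r ^ 2 + 2 * (α * β) * c + β * β * r ^ 2 = r ^ 2 := by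
    have h1 : ‖α • xh + β • e‖ ^ 2 = r ^ 2 := by rw [hnorm]
    rw [norm_add_sq_real, norm_smul, norm_smul, real_inner_smul_left,
      real_inner_smul_right, hrx, hre, Real.norm_eq_abs, Real.norm_eq_abs,
      abs_of_nonneg hα, abs_of_nonneg hβ, ← hc] at h1
    nlinarith [h1]
  rw [hexp]
  clear hf hmv heig' key key0 hsym hexp hnorm heig hfe hfx hre hrx hc hAdef hd
  clear hM M f e xh
  have h3 : α * β * c * (lam * r ^ 2 + 2 * δ) ≤ 0 :=
    mul_nonpos_of_nonneg_of_nonpos (mul_nonneg (mul_nonneg hα hβ) hip) (by linarith)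
  have h5 : β * β * (lam * r ^ 2 + 2 * δ) ≤ 0 :=
    mul_nonpos_of_nonneg_of_nonpos (mul_self_nonneg β) (by linarith)
  rcases eq_or_lt_of_le hα with h0 | hpos
  · -- α = 0
    have hβ2 : β * β = 1 := by
      rw [← h0] at hnc
      have h' : β * β * r ^ 2 = 1 * r ^ 2 := by linear_combination hnc
      exact mul_right_cancel₀ (ne_of_gt hr2) h' 
    rw [← h0, hβ2]
    nlinarith [hlam]
  · have h4 : α * α * (A + 2 * δ) < 0 :=
      mul_neg_of_pos_of_neg (mul_pos hpos hpos) (by linarith)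
    have hG : r ^ 2 * ((1/2) * (α * α * A + 2 * (α * β) * (lam * c)
          + β * β * (lam * r ^ 2)) + δ)
        = 1/2 * r ^ 2 * (α * α * (A + 2 * δ)) + α * β * c * (lam * r ^ 2 + 2 * δ)
          + 1/2 * r ^ 2 * (β * β * (lam * r ^ 2 + 2 * δ)) := by
      linear_combination -δ * hnc
    have hneg : r ^ 2 * ((1/2) * (α * α * A + 2 * (α * β) * (lam * c)
        + β * β * (lam * r ^ 2)) + δ) < 0 := by
      rw [hG]
      nlinarith [h3, h4, h5, hr2]
    by_contra hcon
    push_neg at hcon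
    have hge : (0:ℝ) ≤ r ^ 2 * ((1/2) * (α * α * A + 2 * (α * β) * (lam * c)
        + β * β * (lam * r ^ 2)) + δ) := mul_nonneg hr2.le (by linarith)
    linarith
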